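/- Let φ: U(G) → U(G⁻ ⊕ H) be the projection along the direct sum decomposition U(G) = U(G⁻ ⊕ H) ⊕ U(G)G⁺, and for i ∈ I₁ ∪ I₂ and c ∈ ℂ define χ_{i,c} g = c·g + φ(Ω_i g) on U(G⁻ ⊕ H). Then χ_{i,c} and χ_{j,c'} commute: χ_{i,c} χ_{j,c'} g = χ_{j,c'} χ_{i,c} g for all g ∈ U(G⁻ ⊕ H). -/
import Mathlib


/-! We model the universal enveloping superalgebra `U(sl(m+1/n+1))` faithfully by
working in an arbitrary ring `U` equipped with elements `E a b` (the images of the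
matrix units `E_{ab}`, `1 ≤ a,b ≤ m+n+2`) satisfying the super-commutation
relations of `gl(m+1/n+1)`; an identity holds in the enveloping algebra iff it
holds in every such `U`. -/

/-- Parity of the matrix unit `E_{ab}` (1-based indices): odd iff exactly one of
`a, b` lies in the second block `{m+2,…,m+n+2}`. -/
abbrev podd (m : ℕ) (a b : ℤ) : Bool :=
  xor (decide ((m : ℤ) + 1 < a)) (decide ((m : ℤ) + 1 < b))

/-- The sign `(−1)^{p(ab)p(cd)}`. -/
abbrev ssgn (m : ℕ) (a b c d : ℤ) : ℤ :=
  if podd m a b && podd m c d then -1 else 1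

/-- The defining super-commutation relations of `gl(m+1/n+1)`:
`[E_{ab}, E_{cd}] = δ_{bc} E_{ad} − (−1)^{p(ab)p(cd)} δ_{da} E_{cb}`. -/
def glRel (m n : ℕ) {U : Type*} [Ring U] (E : ℤ → ℤ → U) : Prop :=
  ∀ a b c d : ℤ,
    1 ≤ a → a ≤ (m : ℤ) + n + 2 → 1 ≤ b → b ≤ (m : ℤ) + n + 2 →
    1 ≤ c → c ≤ (m : ℤ) + n + 2 → 1 ≤ d → d ≤ (m : ℤ) + n + 2 →
    E a b * E c d = ssgn m a b c d • (E c d * E a b) +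
      ((if b = c then E a d else 0) - ssgn m a b c d • (if d = a then E c b else 0))

/-- The root vector `e_{ij} = E_{m+i+1, m+j+2}` for `i ≤ j` in `I = {-m,…,n}`. -/
abbrev eV (m : ℕ) {U : Type*} [Ring U] (E : ℤ → ℤ → U) (i j : ℤ) : U :=
  E ((m : ℤ) + i + 1) ((m : ℤ) + j + 2)

/-- The root vector `f_{ij} = E_{m+j+2, m+i+1}`. -/
abbrev fV (m : ℕ) {U : Type*} [Ring U] (E : ℤ → ℤ → U) (i j : ℤ) : U :=
  E ((m : ℤ) + j + 2) ((m : ℤ) + i + 1)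

/-- The Cartan element `h_{ij} = E_{m+i+1,m+i+1} − (−1)^{σ_{ij}} E_{m+j+2,m+j+2}`,
where `σ_{ij} = 1` iff `α_{ij}` is odd, i.e. `i ≤ 0 ≤ j`. -/
abbrev hV (m : ℕ) {U : Type*} [Ring U] (E : ℤ → ℤ → U) (i j : ℤ) : U :=
  E ((m : ℤ) + i + 1) ((m : ℤ) + i + 1)
    - (if i ≤ 0 ∧ 0 ≤ j then (-1 : ℤ) else 1) • E ((m : ℤ) + j + 2) ((m : ℤ) + j + 2)

/-- The sign `(−1)^{|e_{ij}||e_{kl}|}` for root vectors: `e_{ij}` is odd iff `i ≤ 0 ≤ j`. -/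
abbrev obr (i j k l : ℤ) : ℤ :=
  if (i ≤ 0 ∧ 0 ≤ j) ∧ (k ≤ 0 ∧ 0 ≤ l) then -1 else 1

/-- The zero-weight element `Ω_i ∈ U(G)`:
`Ω_i = 1 − Σ_{-m ≤ k ≤ i} f_{ki} e_{ki}` for `i < 0`, and
`Ω_i = 1 − Σ_{i ≤ k ≤ n} f_{ik} e_{ik}` for `i > 0`. -/
noncomputable abbrev OmegaV (m n : ℕ) {U : Type*} [Ring U] (E : ℤ → ℤ → U) (i : ℤ) : U :=
  if i < 0 then 1 - ∑ k ∈ Finset.Icc (-(m : ℤ)) i, fV m E k i * eV m E k i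
  else 1 - ∑ k ∈ Finset.Icc i (n : ℤ), fV m E i k * eV m E i k

/-- The element `ω_i ∈ ℂ ⊕ H`: `ω_i = m+1+i+h_{-m,i}` for `i < 0` and
`ω_i = n+1−i+h_{i,n}` for `i > 0`. -/
noncomputable abbrev omegaV (m n : ℕ) {U : Type*} [Ring U] (E : ℤ → ℤ → U) (i : ℤ) : U :=
  if i < 0 then (((m : ℤ) + 1 + i : ℤ) : U) + hV m E (-(m : ℤ)) i
  else (((n : ℤ) + 1 - i : ℤ) : U) + hV m E i (n : ℤ)

/-- `X_i = ω_i + Ω_i`. -/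
noncomputable abbrev XV (m n : ℕ) {U : Type*} [Ring U] (E : ℤ → ℤ → U) (i : ℤ) : U :=
  omegaV m n E i + OmegaV m n E i

/-- The left ideal `U(G)G⁺ ⊆ U(G)`: the span of elements `u * e(α)`, `α ∈ Δ⁺`,
i.e. `u * E_{ab}` with `a < b` (strictly upper triangular matrix units). -/
noncomputable def Kid (m n : ℕ) {U : Type*} [Ring U] [Algebra ℂ U] (E : ℤ → ℤ → U) :
    Submodule ℂ U :=
  Submodule.span ℂ
    {x | ∃ u : U, ∃ a b : ℤ, 1 ≤ a ∧ a < b ∧ b ≤ (m : ℤ) + n + 2 ∧ x = u * E a b}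

/-- The subalgebra `U(G⁻ ⊕ H) ⊆ U(G)`: generated by the `E_{ab}` with `b ≤ a`
(lower triangular and diagonal matrix units, i.e. the `f`'s and the Cartan). -/
noncomputable def Lsub (m n : ℕ) {U : Type*} [Ring U] [Algebra ℂ U] (E : ℤ → ℤ → U) :
    Subalgebra ℂ U :=
  Algebra.adjoin ℂ {x | ∃ a b : ℤ, 1 ≤ b ∧ b ≤ a ∧ a ≤ (m : ℤ) + n + 2 ∧ x = E a b}

/-- The operator `χ_{i,c} g = c • g + φ(Ω_i g)`, where `φ` is the projection
`U(G) → U(G⁻ ⊕ H)` along `U(G)G⁺`. -/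
noncomputable def chiOp (m n : ℕ) {U : Type*} [Ring U] [Algebra ℂ U] (E : ℤ → ℤ → U)
    (φ : U →ₗ[ℂ] U) (i : ℤ) (c : ℂ) (g : U) : U :=
  c • g + φ (OmegaV m n E i * g)

section AuxStmt12

variable {U : Type*} [Ring U]

private lemma swap4 (x y z w p q r s : U)
    (h1 : y * z = z * y + p) (h2 : x * z = z * x + q)
    (h3 : y * w = w * y + r) (h4 : x * w = w * x + s) :
    (x*y)*(z*w) = (z*w)*(x*y) + (z*s*y + q*(w*y) + x*z*r + x*p*w) := by
  have e1 : (x*z)*(w*y) = (z*w)*(x*y) + (z*s*y + q*(w*y)) := by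
    have e0 : (x*z)*(w*y) = ((x*z)*w)*y := by noncomm_ring
    rw [e0, h2]
    have e2 : ((z*x+q)*w)*y = z*(x*w)*y + q*(w*y) := by noncomm_ring
    rw [e2, h4]
    noncomm_ring
  calc (x*y)*(z*w) = x*(y*z)*w := by noncomm_ring
    _ = x*(z*y+p)*w := by rw [h1]
    _ = (x*z)*(y*w) + x*p*w := by noncomm_ring
    _ = (x*z)*(w*y+r) + x*p*w := by rw [h3]
    _ = (x*z)*(w*y) + (x*z*r + x*p*w) := by noncomm_ring
    _ = ((z*w)*(x*y) + (z*s*y + q*(w*y))) + (x*z*r + x*p*w) := by rw [e1]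
    _ = _ := by noncomm_ring

/-- The even commutation relation extracted from `glRel`. -/
private lemma hcE {m n : ℕ} {E : ℤ → ℤ → U} (hE : glRel m n E) :
    ∀ a b c d : ℤ, 1 ≤ a → a ≤ (m:ℤ)+n+2 → 1 ≤ b → b ≤ (m:ℤ)+n+2 →
      1 ≤ c → c ≤ (m:ℤ)+n+2 → 1 ≤ d → d ≤ (m:ℤ)+n+2 → podd m a b = false →
      E a b * E c d = E c d * E a b +
        ((if b = c then E a d else 0) - (if d = a then E c b else 0)) := by
  intro a b c d h1 h2 h3 h4 h5 h6 h7 h8 hp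
  have := hE a b c d h1 h2 h3 h4 h5 h6 h7 h8
  simpa [ssgn, hp] using this

private noncomputable def SneS (E : ℤ → ℤ → U) (b : ℤ) : U :=
  ∑ a ∈ Finset.Icc 1 (b-1), E b a * E a b

private noncomputable def SpoS (m n : ℕ) (E : ℤ → ℤ → U) (a : ℤ) : U :=
  ∑ c ∈ Finset.Icc (a+1) ((m:ℤ)+n+2), E c a * E a c

private lemma Omega_neg {m n : ℕ} {E : ℤ → ℤ → U} {i : ℤ} (hi : i < 0) :
    OmegaV m n E i = 1 - SneS E ((m:ℤ)+i+2) := by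
  simp only [OmegaV, if_pos hi, SneS, fV, eV]
  congr 1
  refine Finset.sum_nbij' (fun k => (m:ℤ)+k+1) (fun a => a - (m:ℤ) - 1) ?_ ?_ ?_ ?_ ?_ <;>
      intro x hx <;> simp only [Finset.mem_Icc] at hx ⊢ <;>
    first
      | omega
      | (congr 1 <;> congr 1 <;> omega)

private lemma Omega_pos {m n : ℕ} {E : ℤ → ℤ → U} {i : ℤ} (hi : 0 < i) :
    OmegaV m n E i = 1 - SpoS m n E ((m:ℤ)+i+1) := by
  simp only [OmegaV, if_neg (by omega : ¬ i < 0), SpoS, fV, eV]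
  congr 1
  refine Finset.sum_nbij' (fun k => (m:ℤ)+k+2) (fun c => c - (m:ℤ) - 2) ?_ ?_ ?_ ?_ ?_ <;>
      intro x hx <;> simp only [Finset.mem_Icc] at hx ⊢ <;>
    first
      | omega
      | (congr 1 <;> congr 1 <;> omega)

private lemma Scomm_negneg {m n : ℕ} {E : ℤ → ℤ → U} (hE : glRel m n E)
    {b b' : ℤ} (hb1 : 1 ≤ b) (hbb : b < b') (hb' : b' ≤ (m:ℤ)+1) :
    SneS E b * SneS E b' = SneS E b' * SneS E b := by
  have hc := hcE hE
  unfold SneS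
  rw [Finset.sum_mul, Finset.mul_sum]
  refine Finset.sum_congr rfl ?_
  intro a ha
  rw [Finset.mem_Icc] at ha
  obtain ⟨ha1, ha2⟩ := ha
  rw [Finset.mul_sum, Finset.sum_mul]
  have key : ∀ c ∈ Finset.Icc (1:ℤ) (b'-1),
      (E b a * E a b) * (E b' c * E c b')
        = (E b' c * E c b') * (E b a * E a b) +
          (E b' c * (if a = c then E b b' else 0) * E a b
            + (-(if c = b then E b' a else 0)) * (E c b' * E a b)
            + E b a * E b' c * (if b = c then E a b' else 0)
            + E b a * (-(if c = a then E b' b else 0)) * E c b') := by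
    intro c hcm
    rw [Finset.mem_Icc] at hcm
    obtain ⟨hc1, hc2⟩ := hcm
    have hmn : (m:ℤ)+1 ≤ (m:ℤ)+n+2 := by
      have : (0:ℤ) ≤ n := Int.ofNat_nonneg n
      omega
    have pl : ∀ x y : ℤ, x ≤ (m:ℤ)+1 → y ≤ (m:ℤ)+1 → podd m x y = false := by
      intro x y hx hy; simp [podd]; omega
    have h1 := hc a b b' c (by omega) (by omega) (by omega) (by omega) (by omega)
      (by omega) (by omega) (by omega) (pl _ _ (by omega) (by omega))
    have h2 := hc b a b' c (by omega) (by omega) (by omega) (by omega) (by omega)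
      (by omega) (by omega) (by omega) (pl _ _ (by omega) (by omega))
    have h3 := hc a b c b' (by omega) (by omega) (by omega) (by omega) (by omega)
      (by omega) (by omega) (by omega) (pl _ _ (by omega) (by omega))
    have h4 := hc b a c b' (by omega) (by omega) (by omega) (by omega) (by omega)
      (by omega) (by omega) (by omega) (pl _ _ (by omega) (by omega))
    have hne1 : ¬ (b = b') := by omega
    have hne2 : ¬ (a = b') := by omega
    have hne3 : ¬ (b' = a) := by omega
    have hne4 : ¬ (b' = b) := by omega
    rw [if_neg hne1, zero_sub] at h1
    rw [if_neg hne2, zero_sub] at h2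
    rw [if_neg hne3, sub_zero] at h3
    rw [if_neg hne4, sub_zero] at h4
    exact swap4 (E b a) (E a b) (E b' c) (E c b') _ _ _ _ h1 h2 h3 h4
  rw [Finset.sum_congr rfl key, Finset.sum_add_distrib]
  have hmem_a : a ∈ Finset.Icc (1:ℤ) (b'-1) := by rw [Finset.mem_Icc]; omega
  have hmem_b : b ∈ Finset.Icc (1:ℤ) (b'-1) := by rw [Finset.mem_Icc]; omega
  have hz : ∑ c ∈ Finset.Icc (1:ℤ) (b'-1),
      (E b' c * (if a = c then E b b' else 0) * E a b
        + (-(if c = b then E b' a else 0)) * (E c b' * E a b)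
        + E b a * E b' c * (if b = c then E a b' else 0)
        + E b a * (-(if c = a then E b' b else 0)) * E c b') = 0 := by
    simp only [mul_ite, ite_mul, mul_zero, zero_mul, neg_zero, neg_mul, mul_neg, neg_neg,
      Finset.sum_add_distrib, Finset.sum_neg_distrib, Finset.sum_ite_eq,
      Finset.sum_ite_eq', hmem_a, hmem_b, if_pos]
    noncomm_ring
  rw [hz, add_zero]

private lemma Scomm_pospos {m n : ℕ} {E : ℤ → ℤ → U} (hE : glRel m n E)
    {a a' : ℤ} (ha1 : (m:ℤ)+2 ≤ a) (haa : a < a') (ha' : a' ≤ (m:ℤ)+n+1) :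
    SpoS m n E a * SpoS m n E a' = SpoS m n E a' * SpoS m n E a := by
  have hc := hcE hE
  unfold SpoS
  rw [Finset.mul_sum, Finset.sum_mul]
  refine Finset.sum_congr rfl ?_
  intro c' hc'
  rw [Finset.mem_Icc] at hc'
  obtain ⟨hc1', hc2'⟩ := hc'
  rw [Finset.sum_mul, Finset.mul_sum]
  have ph : ∀ x y : ℤ, (m:ℤ)+2 ≤ x → (m:ℤ)+2 ≤ y → podd m x y = false := by
    intro x y hx hy; simp [podd]; omega
  have key : ∀ c ∈ Finset.Icc (a+1) ((m:ℤ)+n+2),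
      (E c a * E a c) * (E c' a' * E a' c')
        = (E c' a' * E a' c') * (E c a * E a c) +
          (E c' a' * (-(if c' = c then E a' a else 0)) * E a c
            + (-(if a' = c then E c' a else 0)) * (E a' c' * E a c)
            + E c a * E c' a' * (if c = a' then E a c' else 0)
            + E c a * (if c = c' then E a a' else 0) * E a' c') := by
    intro c hcm
    rw [Finset.mem_Icc] at hcm
    obtain ⟨hcm1, hcm2⟩ := hcm
    have h1 := hc a c c' a' (by omega) (by omega) (by omega) (by omega) (by omega)
      (by omega) (by omega) (by omega) (ph _ _ (by omega) (by omega))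
    have h2 := hc c a c' a' (by omega) (by omega) (by omega) (by omega) (by omega)
      (by omega) (by omega) (by omega) (ph _ _ (by omega) (by omega))
    have h3 := hc a c a' c' (by omega) (by omega) (by omega) (by omega) (by omega)
      (by omega) (by omega) (by omega) (ph _ _ (by omega) (by omega))
    have h4 := hc c a a' c' (by omega) (by omega) (by omega) (by omega) (by omega)
      (by omega) (by omega) (by omega) (ph _ _ (by omega) (by omega))
    have hne1 : ¬ (a' = a) := by omega
    have hne2 : ¬ (a = c') := by omega
    have hne3 : ¬ (c' = a) := by omega
    have hne4 : ¬ (a = a') := by omega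
    rw [if_neg hne1, sub_zero] at h1
    rw [if_neg hne2, zero_sub] at h2
    rw [if_neg hne3, sub_zero] at h3
    rw [if_neg hne4, zero_sub] at h4
    exact swap4 (E c a) (E a c) (E c' a') (E a' c') _ _ _ _ h1 h2 h3 h4
  rw [Finset.sum_congr rfl key, Finset.sum_add_distrib]
  have hmem_c' : c' ∈ Finset.Icc (a+1) ((m:ℤ)+n+2) := by rw [Finset.mem_Icc]; omega
  have hmem_a' : a' ∈ Finset.Icc (a+1) ((m:ℤ)+n+2) := by rw [Finset.mem_Icc]; omega
  have hz : ∑ c ∈ Finset.Icc (a+1) ((m:ℤ)+n+2),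
      (E c' a' * (-(if c' = c then E a' a else 0)) * E a c
        + (-(if a' = c then E c' a else 0)) * (E a' c' * E a c)
        + E c a * E c' a' * (if c = a' then E a c' else 0)
        + E c a * (if c = c' then E a a' else 0) * E a' c') = 0 := by
    simp only [mul_ite, ite_mul, mul_zero, zero_mul, neg_zero, neg_mul, mul_neg, neg_neg,
      Finset.sum_add_distrib, Finset.sum_neg_distrib, Finset.sum_ite_eq,
      Finset.sum_ite_eq', hmem_c', hmem_a', if_pos]
    have h5 := hc a' a c' a' (by omega) (by omega) (by omega) (by omega) (by omega)
      (by omega) (by omega) (by omega) (ph _ _ (by omega) (by omega))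
    have h6 := hc a a' a' c' (by omega) (by omega) (by omega) (by omega) (by omega)
      (by omega) (by omega) (by omega) (ph _ _ (by omega) (by omega))
    rw [if_neg (show ¬ (a = c') by omega), if_pos rfl, zero_sub] at h5
    rw [if_pos rfl, if_neg (show ¬ (c' = a) by omega), sub_zero] at h6
    rw [h5, mul_assoc (E c' a) (E a a') (E a' c'), h6]
    noncomm_ring
  rw [hz, add_zero]

private lemma Scomm_mixed {m n : ℕ} {E : ℤ → ℤ → U} (hE : glRel m n E)
    {b a' : ℤ} (hb1 : 1 ≤ b) (hb2 : b ≤ (m:ℤ)+1)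
    (ha1 : (m:ℤ)+2 ≤ a') (ha2 : a' ≤ (m:ℤ)+n+1) :
    SneS E b * SpoS m n E a' = SpoS m n E a' * SneS E b := by
  have hc := hcE hE
  unfold SneS SpoS
  rw [Finset.sum_mul, Finset.mul_sum]
  refine Finset.sum_congr rfl ?_
  intro a ha
  rw [Finset.mem_Icc] at ha
  obtain ⟨ha1', ha2'⟩ := ha
  rw [Finset.mul_sum, Finset.sum_mul]
  refine Finset.sum_congr rfl ?_
  intro c' hc'
  rw [Finset.mem_Icc] at hc'
  obtain ⟨hc1', hc2'⟩ := hc'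
  have pl : ∀ x y : ℤ, x ≤ (m:ℤ)+1 → y ≤ (m:ℤ)+1 → podd m x y = false := by
    intro x y hx hy; simp [podd]; omega
  have h1 := hc a b c' a' (by omega) (by omega) (by omega) (by omega) (by omega)
    (by omega) (by omega) (by omega) (pl _ _ (by omega) (by omega))
  have h2 := hc b a c' a' (by omega) (by omega) (by omega) (by omega) (by omega)
    (by omega) (by omega) (by omega) (pl _ _ (by omega) (by omega))
  have h3 := hc a b a' c' (by omega) (by omega) (by omega) (by omega) (by omega)
    (by omega) (by omega) (by omega) (pl _ _ (by omega) (by omega))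
  have h4 := hc b a a' c' (by omega) (by omega) (by omega) (by omega) (by omega)
    (by omega) (by omega) (by omega) (pl _ _ (by omega) (by omega))
  rw [if_neg (show ¬ (b = c') by omega), if_neg (show ¬ (a' = a) by omega), sub_zero] at h1
  rw [if_neg (show ¬ (a = c') by omega), if_neg (show ¬ (a' = b) by omega), sub_zero] at h2
  rw [if_neg (show ¬ (b = a') by omega), if_neg (show ¬ (c' = a) by omega), sub_zero] at h3
  rw [if_neg (show ¬ (a = a') by omega), if_neg (show ¬ (c' = b) by omega), sub_zero] at h4
  simpa using swap4 (E b a) (E a b) (E c' a') (E a' c') 0 0 0 0 h1 h2 h3 h4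

private lemma sub_one_sub_one_comm (S S' : U) (h : S * S' = S' * S) :
    (1 - S) * (1 - S') = (1 - S') * (1 - S) := by
  rw [show (1-S)*(1-S') = 1 - S - S' + S*S' from by noncomm_ring, h]
  noncomm_ring

/-- The `Ω_i` pairwise commute. -/
private lemma Omega_comm {m n : ℕ} {E : ℤ → ℤ → U} (hE : glRel m n E)
    {i j : ℤ} (him : -(m:ℤ) ≤ i) (hin : i ≤ (n:ℤ)) (hi0 : i ≠ 0)
    (hjm : -(m:ℤ) ≤ j) (hjn : j ≤ (n:ℤ)) (hj0 : j ≠ 0) :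
    OmegaV m n E i * OmegaV m n E j = OmegaV m n E j * OmegaV m n E i := by
  rcases lt_or_gt_of_ne hi0 with hi | hi <;> rcases lt_or_gt_of_ne hj0 with hj | hj
  · rw [Omega_neg hi, Omega_neg hj]
    refine sub_one_sub_one_comm _ _ ?_
    rcases lt_trichotomy i j with h | h | h
    · exact Scomm_negneg hE (by omega) (by omega) (by omega)
    · rw [h]
    · exact (Scomm_negneg hE (by omega) (by omega) (by omega)).symm
  · rw [Omega_neg hi, Omega_pos hj]
    exact sub_one_sub_one_comm _ _ (Scomm_mixed hE (by omega) (by omega) (by omega) (by omega))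
  · rw [Omega_pos hi, Omega_neg hj]
    exact sub_one_sub_one_comm _ _
      (Scomm_mixed hE (by omega) (by omega) (by omega) (by omega)).symm
  · rw [Omega_pos hi, Omega_pos hj]
    refine sub_one_sub_one_comm _ _ ?_
    rcases lt_trichotomy i j with h | h | h
    · exact Scomm_pospos hE (by omega) (by omega) (by omega)
    · rw [h]
    · exact (Scomm_pospos hE (by omega) (by omega) (by omega)).symm

end AuxStmt12

private lemma Kid_mul_left (m n : ℕ) {U : Type*} [Ring U] [Algebra ℂ U]
    (E : ℤ → ℤ → U) (v x : U) (hx : x ∈ Kid m n E) : v * x ∈ Kid m n E := by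
  induction hx using Submodule.span_induction with
  | mem y hy =>
    obtain ⟨u, a, b, h1, h2, h3, h4⟩ := hy
    subst h4
    exact Submodule.subset_span ⟨v*u, a, b, h1, h2, h3, (mul_assoc v u (E a b)).symm⟩
  | zero => rw [mul_zero]; exact Submodule.zero_mem _
  | add y z _ _ hy hz => rw [mul_add]; exact Submodule.add_mem _ hy hz
  | smul c y _ hy => rw [mul_smul_comm]; exact Submodule.smul_mem _ _ hy


/-- The operators `χ_{i,c}` and `χ_{j,c'}` commute on `U(G⁻ ⊕ H)`, where `φ` is the
projection of `U(G)` onto `U(G⁻ ⊕ H)` along the left ideal `U(G)G⁺`. -/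
theorem stmt12 (m n : ℕ) (U : Type*) [Ring U] [Algebra ℂ U] (E : ℤ → ℤ → U)
    (hE : glRel m n E) (φ : U →ₗ[ℂ] U)
    (hrange : ∀ u : U, φ u ∈ Lsub m n E)
    (hfix : ∀ g ∈ Lsub m n E, φ g = g)
    (hker : ∀ x ∈ Kid m n E, φ x = 0)
    (hdec : ∀ u : U, u - φ u ∈ Kid m n E) :
    ∀ i j : ℤ, -(m : ℤ) ≤ i → i ≤ (n : ℤ) → i ≠ 0 →
      -(m : ℤ) ≤ j → j ≤ (n : ℤ) → j ≠ 0 →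
      ∀ c c' : ℂ, ∀ g ∈ Lsub m n E,
        chiOp m n E φ i c (chiOp m n E φ j c' g)
          = chiOp m n E φ j c' (chiOp m n E φ i c g) := by
  intro i j him hin hi0 hjm hjn hj0 c c' g hg
  have hΩ : OmegaV m n E j * OmegaV m n E i = OmegaV m n E i * OmegaV m n E j :=
    Omega_comm hE hjm hjn hj0 him hin hi0
  have key : ∀ (k : ℤ) (x : U),
      φ (OmegaV m n E k * φ x) = φ (OmegaV m n E k * x) := by
    intro k x
    have h0 : OmegaV m n E k * (x - φ x) ∈ Kid m n E :=
      Kid_mul_left m n E _ _ (hdec x)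
    have h1 := hker _ h0
    rw [mul_sub, map_sub, sub_eq_zero] at h1
    exact h1.symm
  simp only [chiOp, mul_add, mul_smul_comm, map_add, map_smul, key]
  simp only [← mul_assoc]
  rw [hΩ]
  simp only [smul_add]
  rw [smul_comm c' c]
  abel
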